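/- With z_α = α(k+k₃) + q_α as a differentiable curve on the resonant manifold {C = 0} and r_α² = |z_α|² - α²|k+k₃|², one has ∂_α(r_α²) = 2|k+k₃|² · ((1-α)·A - α·B)/(A + B), where A = Ω'(|k+k₃-z_α|)/|k+k₃-z_α| and B = Ω'(|z_α|)/|z_α|. -/
import Mathlib


open RealInnerProductSpace

/-- the derivative of `r_α² = |z_α|² - α²|k+k₃|²` along the resonant
manifold. -/
theorem stmt_3
    (Ω Ω' : ℝ → ℝ) (C₂ C₃ : ℝ) (hC₂ : 0 < C₂)
    (hΩ : ∀ x : ℝ, HasDerivAt Ω (Ω' x) x)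
    (hlb : ∀ x : ℝ, 0 < x → C₂ ≤ Ω' x / x)
    (hub : ∀ x : ℝ, 0 < x → Ω' x / x ≤ C₃)
    (k k₃ : EuclideanSpace ℝ (Fin 3)) (hkk₃ : k + k₃ ≠ 0)
    (Cfun : EuclideanSpace ℝ (Fin 3) → ℝ)
    (hCfun : ∀ z, Cfun z = Ω ‖k + k₃ - z‖ - Ω ‖k‖ - Ω ‖k₃‖ + Ω ‖z‖)
    (hgrad : ∀ z, z ≠ 0 → z ≠ k + k₃ →
      HasGradientAt Cfun
        ((Ω' ‖k + k₃ - z‖ / ‖z - (k + k₃)‖) • (z - (k + k₃))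
          + (Ω' ‖z‖ / ‖z‖) • z) z)
    (I : Set ℝ) (hI : IsOpen I)
    (z : ℝ → EuclideanSpace ℝ (Fin 3)) (z' : ℝ → EuclideanSpace ℝ (Fin 3))
    (hzdiff : ∀ a ∈ I, HasDerivAt z (z' a) a)
    (hres : ∀ a ∈ I, Cfun (z a) = 0)
    (hdecomp : ∀ a ∈ I, ⟪z a - a • (k + k₃), k + k₃⟫ = 0)
    (hz0 : ∀ a ∈ I, z a ≠ 0) (hzk : ∀ a ∈ I, z a ≠ k + k₃)
    (α : ℝ) (hα : α ∈ I)
    (A B : ℝ)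
    (hA : A = Ω' ‖k + k₃ - z α‖ / ‖k + k₃ - z α‖)
    (hB : B = Ω' ‖z α‖ / ‖z α‖) :
    HasDerivAt (fun a => ‖z a‖ ^ 2 - a ^ 2 * ‖k + k₃‖ ^ 2)
      (2 * ‖k + k₃‖ ^ 2 * (((1 - α) * A - α * B) / (A + B))) α := by

  set K := k + k₃ with hKdef
  have hzd := hzdiff α hα
  have hzα0 := hz0 α hα
  have hzαK := hzk α hα
  have hKzpos : (0:ℝ) < ‖K - z α‖ := by
    rw [norm_pos_iff, sub_ne_zero]
    exact fun h => hzαK h.symm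
  have hzpos : (0:ℝ) < ‖z α‖ := norm_pos_iff.mpr hzα0
  have hApos : 0 < A := by
    rw [hA]
    exact lt_of_lt_of_le hC₂ (hlb _ hKzpos)
  have hBpos : 0 < B := by
    rw [hB]
    exact lt_of_lt_of_le hC₂ (hlb _ hzpos)
  have hABne : A + B ≠ 0 := by positivity
  -- derivative of a ↦ ⟪z a, K⟫ is ‖K‖²
  have hKd : ⟪z' α, K⟫ = ‖K‖ ^ 2 := by
    have h1 : HasDerivAt (fun a => ⟪z a - a • K, K⟫) (⟪z' α - K, K⟫) α := by
      have := (hzd.sub ((hasDerivAt_id α).smul_const K)).inner ℝ (hasDerivAt_const α K)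
      simpa using this
    have h2 : HasDerivAt (fun a => ⟪z a - a • K, K⟫) (0 : ℝ) α := by
      have := (hasDerivAt_const α (0:ℝ)).congr_of_eventuallyEq
        (Filter.eventuallyEq_of_mem (hI.mem_nhds hα) (fun a ha => hdecomp a ha))
      exact this
    have h3 : ⟪z' α - K, K⟫ = (0:ℝ) := h1.unique h2
    have h4 : ⟪z' α, K⟫ - ⟪K, K⟫ = (0:ℝ) := by rwa [inner_sub_left] at h3
    rw [real_inner_self_eq_norm_sq] at h4
    linarith
  -- gradient equation
  have hG := hgrad (z α) hzα0 hzαK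
  have hAeq : Ω' ‖K - z α‖ / ‖z α - K‖ = A := by
    rw [hA, norm_sub_rev (z α) K]
  have hchain : HasDerivAt (fun a => Cfun (z a))
      (⟪A • (z α - K) + B • z α, z' α⟫) α := by
    have := hG.hasFDerivAt.comp_hasDerivAt α hzd
    rw [InnerProductSpace.toDual_apply_apply] at this
    rwa [hAeq, ← hB] at this
  have hchain0 : HasDerivAt (fun a => Cfun (z a)) (0:ℝ) α :=
    (hasDerivAt_const α (0:ℝ)).congr_of_eventuallyEq
      (Filter.eventuallyEq_of_mem (hI.mem_nhds hα) (fun a ha => hres a ha))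
  have hkey : A * ⟪z α, z' α⟫ - A * ‖K‖ ^ 2 + B * ⟪z α, z' α⟫ = 0 := by
    have h := hchain.unique hchain0
    rw [inner_add_left, inner_smul_left, inner_smul_left, inner_sub_left] at h
    have hsym : ⟪K, z' α⟫ = ‖K‖ ^ 2 := by rw [real_inner_comm]; exact hKd
    rw [hsym] at h
    simpa [mul_sub, RCLike.star_def] using h
  -- derivative of the main function
  have hmain : HasDerivAt (fun a => ‖z a‖ ^ 2 - a ^ 2 * ‖K‖ ^ 2)
      (2 * ⟪z α, z' α⟫ - 2 * α * ‖K‖ ^ 2) α := by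
    have h1 : HasDerivAt (fun a => ⟪z a, z a⟫) (⟪z α, z' α⟫ + ⟪z' α, z α⟫) α :=
      hzd.inner ℝ hzd
    have h1' : HasDerivAt (fun a => ‖z a‖ ^ 2) (2 * ⟪z α, z' α⟫) α := by
      have heq : (fun a => ‖z a‖ ^ 2) = fun a => ⟪z a, z a⟫ := by
        funext a; rw [real_inner_self_eq_norm_sq]
      rw [heq]
      convert h1 using 1
      rw [real_inner_comm (z' α) (z α)]; ring
    have h2 : HasDerivAt (fun a : ℝ => a ^ 2 * ‖K‖ ^ 2) (2 * α * ‖K‖ ^ 2) α := by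
      have := (hasDerivAt_pow 2 α).mul_const (‖K‖ ^ 2)
      simpa [mul_comm] using this
    exact h1'.sub h2
  convert hmain using 1
  have hinner : ⟪z α, z' α⟫ = A * ‖K‖ ^ 2 / (A + B) := by
    rw [eq_div_iff hABne]
    linear_combination hkey
  rw [hinner]
  field_simp
  ring
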